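/- Let π be a stationary distribution of the free chain with parameters (λ₁, λ_tot, μ, θ) such that Σ_{x∈ℕ²} x₂·π(x) < ∞. Then the flow-balance identity λ₁ + λ_tot = μ·(1 − π(0,0)) + θ·Σ_{x∈ℕ²} x₂·π(x) holds. -/

import Mathlib

open Filter Topology

/-- `π` is a stationary distribution of the free chain with parameters
`(l1, lt, mu, th)` (arrival rates `l1`, `lt`, service rate `mu`, mobility rate `th`). -/
def IsStationaryFree (l1 lt mu th : ℝ) (π : ℕ × ℕ → ℝ) : Prop :=
  (∀ x, 0 ≤ π x) ∧ HasSum π 1 ∧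
    ∀ x1 x2 : ℕ,
      π (x1, x2) * (l1 + lt + (if (x1, x2) ≠ ((0 : ℕ), (0 : ℕ)) then mu else 0)
          + th * (x2 : ℝ))
        = l1 * (if 1 ≤ x1 then π (x1 - 1, x2) else 0)
          + lt * (if 1 ≤ x2 then π (x1, x2 - 1) else 0)
          + mu * ((x1 : ℝ) + 1) / ((x1 : ℝ) + 1 + (x2 : ℝ)) * π (x1 + 1, x2)
          + (mu * ((x2 : ℝ) + 1) / ((x1 : ℝ) + (x2 : ℝ) + 1) + th * ((x2 : ℝ) + 1))
              * π (x1, x2 + 1)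

/-- Summing a summable family over the antidiagonal levels of `ℕ × ℕ`. -/
lemma hasSum_levels (f : ℕ × ℕ → ℝ) (a : ℝ) (hf : HasSum f a) :
    HasSum (fun n => ∑ k ∈ Finset.range (n + 1), f (k, n - k)) a := by
  have h1 : HasSum (f ∘ Finset.HasAntidiagonal.sigmaAntidiagonalEquivProd) a :=
    (Equiv.hasSum_iff _).2 hf
  have h2 : HasSum (fun n : ℕ => ∑ kl ∈ Finset.HasAntidiagonal.antidiagonal n, f kl) a := by
    refine h1.sigma fun n => ?_
    have := hasSum_fintype (fun c : (Finset.HasAntidiagonal.antidiagonal n : Finset (ℕ × ℕ)) => f c)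
    rwa [Finset.sum_coe_sort] at this
  have h3 : (fun n : ℕ => ∑ kl ∈ Finset.HasAntidiagonal.antidiagonal n, f kl)
      = fun n => ∑ k ∈ Finset.range (n + 1), f (k, n - k) := by
    funext n
    exact Finset.Nat.sum_antidiagonal_eq_sum_range_succ_mk f n
  rwa [h3] at h2

/-- Flow balance identity: λ₁ + λ_tot = μ·(1 − π(0,0)) + θ·E[X₂]. -/
theorem free_chain_flow_balance
    (l1 lt mu th : ℝ) (hl1 : 0 < l1) (hlt : 0 < lt) (hmu : 0 < mu) (hth : 0 ≤ th)
    (π : ℕ × ℕ → ℝ) (hπ : IsStationaryFree l1 lt mu th π)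
    (hsum : Summable (fun x : ℕ × ℕ => (x.2 : ℝ) * π x)) :
    l1 + lt = mu * (1 - π (0, 0)) + th * ∑' x : ℕ × ℕ, (x.2 : ℝ) * π x := by
  obtain ⟨hpos, hsum1, hbal⟩ := hπ
  set E : ℝ := ∑' x : ℕ × ℕ, (x.2 : ℝ) * π x with hE
  set p : ℕ → ℝ := fun n => ∑ k ∈ Finset.range (n + 1), π (k, n - k) with hp
  set e : ℕ → ℝ := fun n => ∑ k ∈ Finset.range (n + 1), ((n - k : ℕ) : ℝ) * π (k, n - k)
    with he
  have hasP : HasSum p 1 := hasSum_levels π 1 hsum1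
  have hasE : HasSum e E := hasSum_levels (fun x => (x.2 : ℝ) * π x) E hsum.hasSum
  -- cut balance at each level
  have key : ∀ n : ℕ, mu * p (n + 1) + th * e (n + 1) = (l1 + lt) * p n := by
    have level : ∀ m : ℕ,
        (l1 + lt) * p (m + 1) + mu * p (m + 1) + th * e (m + 1)
          = (l1 + lt) * p m + mu * p (m + 2) + th * e (m + 2) := by
      intro m
      -- sum the balance equations over the level `m+1`
      have H : ∑ k ∈ Finset.range (m + 2),
            π (k, m + 1 - k) * (l1 + lt + (if (k, m + 1 - k) ≠ ((0 : ℕ), (0 : ℕ)) then mu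
                else 0) + th * ((m + 1 - k : ℕ) : ℝ))
          = ∑ k ∈ Finset.range (m + 2),
              (l1 * (if 1 ≤ k then π (k - 1, m + 1 - k) else 0)
              + lt * (if 1 ≤ m + 1 - k then π (k, m + 1 - k - 1) else 0)
              + mu * ((k : ℝ) + 1) / ((k : ℝ) + 1 + ((m + 1 - k : ℕ) : ℝ)) * π (k + 1, m + 1 - k)
              + (mu * (((m + 1 - k : ℕ) : ℝ) + 1) / ((k : ℝ) + ((m + 1 - k : ℕ) : ℝ) + 1)
                  + th * (((m + 1 - k : ℕ) : ℝ) + 1)) * π (k, m + 1 - k + 1)) :=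
        Finset.sum_congr rfl fun k _ => hbal k (m + 1 - k)
      -- LHS
      have h1 : ∑ k ∈ Finset.range (m + 2),
            π (k, m + 1 - k) * (l1 + lt + (if (k, m + 1 - k) ≠ ((0 : ℕ), (0 : ℕ)) then mu
                else 0) + th * ((m + 1 - k : ℕ) : ℝ))
          = (l1 + lt) * p (m + 1) + mu * p (m + 1) + th * e (m + 1) := by
        have h1' : ∀ k ∈ Finset.range (m + 2),
            π (k, m + 1 - k) * (l1 + lt + (if (k, m + 1 - k) ≠ ((0 : ℕ), (0 : ℕ)) then mu
                else 0) + th * ((m + 1 - k : ℕ) : ℝ))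
            = (l1 + lt) * π (k, m + 1 - k) + mu * π (k, m + 1 - k)
              + th * (((m + 1 - k : ℕ) : ℝ) * π (k, m + 1 - k)) := by
          intro k hk
          have hne : (k, m + 1 - k) ≠ ((0 : ℕ), (0 : ℕ)) := by
            intro hcontra
            have hc1 : k = 0 := congrArg Prod.fst hcontra
            have hc2 : m + 1 - k = 0 := congrArg Prod.snd hcontra
            omega
          rw [if_pos hne]; ring
        rw [Finset.sum_congr rfl h1']
        simp only [hp, he]
        rw [Finset.sum_add_distrib, Finset.sum_add_distrib, ← Finset.mul_sum,
          ← Finset.mul_sum, ← Finset.mul_sum]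
      -- first RHS term
      have h2 : ∑ k ∈ Finset.range (m + 2),
            l1 * (if 1 ≤ k then π (k - 1, m + 1 - k) else 0) = l1 * p m := by
        rw [Finset.sum_range_succ']
        have hstep : ∀ k ∈ Finset.range (m + 1),
            l1 * (if 1 ≤ k + 1 then π (k + 1 - 1, m + 1 - (k + 1)) else 0)
              = l1 * π (k, m - k) := by
          intro k _
          rw [if_pos (by omega)]
          have hi1 : k + 1 - 1 = k := by omega
          have hi2 : m + 1 - (k + 1) = m - k := by omega
          rw [hi1, hi2]
        rw [Finset.sum_congr rfl hstep, if_neg (by omega : ¬ (1 : ℕ) ≤ 0), mul_zero, add_zero]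
        simp only [hp]
        rw [Finset.mul_sum]
      -- second RHS term
      have h3 : ∑ k ∈ Finset.range (m + 2),
            lt * (if 1 ≤ m + 1 - k then π (k, m + 1 - k - 1) else 0) = lt * p m := by
        rw [Finset.sum_range_succ]
        rw [if_neg (by omega : ¬ (1 : ℕ) ≤ m + 1 - (m + 1)), mul_zero, add_zero]
        have hstep : ∀ k ∈ Finset.range (m + 1),
            lt * (if 1 ≤ m + 1 - k then π (k, m + 1 - k - 1) else 0)
              = lt * π (k, m - k) := by
          intro k hk
          have hk' : k ≤ m := Nat.lt_succ_iff.mp (Finset.mem_range.mp hk)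
          rw [if_pos (by omega)]
          have hi : m + 1 - k - 1 = m - k := by omega
          rw [hi]
        rw [Finset.sum_congr rfl hstep]
        simp only [hp]
        rw [Finset.mul_sum]
      -- the two service terms
      have h4 : ∑ k ∈ Finset.range (m + 2),
            (mu * ((k : ℝ) + 1) / ((k : ℝ) + 1 + ((m + 1 - k : ℕ) : ℝ)) * π (k + 1, m + 1 - k)
            + (mu * (((m + 1 - k : ℕ) : ℝ) + 1) / ((k : ℝ) + ((m + 1 - k : ℕ) : ℝ) + 1)
                + th * (((m + 1 - k : ℕ) : ℝ) + 1)) * π (k, m + 1 - k + 1))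
          = mu * p (m + 2) + th * e (m + 2) := by
        have hm2 : ((m : ℝ) + 2) ≠ 0 := by positivity
        -- rewrite each summand into a uniform form
        have step : ∀ k ∈ Finset.range (m + 2),
            (mu * ((k : ℝ) + 1) / ((k : ℝ) + 1 + ((m + 1 - k : ℕ) : ℝ)) * π (k + 1, m + 1 - k)
            + (mu * (((m + 1 - k : ℕ) : ℝ) + 1) / ((k : ℝ) + ((m + 1 - k : ℕ) : ℝ) + 1)
                + th * (((m + 1 - k : ℕ) : ℝ) + 1)) * π (k, m + 1 - k + 1))
            = mu * ((k : ℝ) + 1) / ((m : ℝ) + 2) * π (k + 1, m + 2 - (k + 1))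
              + (mu * ((m : ℝ) + 2 - (k : ℝ)) / ((m : ℝ) + 2)
                  + th * ((m : ℝ) + 2 - (k : ℝ))) * π (k, m + 2 - k) := by
          intro k hk
          have hk' : k ≤ m + 1 := Nat.lt_succ_iff.mp (Finset.mem_range.mp hk)
          have hc : ((m + 1 - k : ℕ) : ℝ) = (m : ℝ) + 1 - (k : ℝ) := by
            push_cast [Nat.cast_sub hk']
            ring
          have hidx1 : m + 2 - (k + 1) = m + 1 - k := by omega
          have hidx2 : m + 2 - k = m + 1 - k + 1 := by omega
          rw [hc, hidx1, hidx2]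
          have hden1 : (k : ℝ) + 1 + ((m : ℝ) + 1 - (k : ℝ)) = (m : ℝ) + 2 := by ring
          have hden2 : (k : ℝ) + ((m : ℝ) + 1 - (k : ℝ)) + 1 = (m : ℝ) + 2 := by ring
          rw [hden1, hden2]
          ring
        rw [Finset.sum_congr rfl step, Finset.sum_add_distrib]
        -- first piece: reindex k+1 ↦ j
        have hA : ∑ k ∈ Finset.range (m + 2),
              mu * ((k : ℝ) + 1) / ((m : ℝ) + 2) * π (k + 1, m + 2 - (k + 1))
            = ∑ j ∈ Finset.range (m + 3), mu * (j : ℝ) / ((m : ℝ) + 2) * π (j, m + 2 - j) := by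
          rw [Finset.sum_range_succ' (fun j => mu * (j : ℝ) / ((m : ℝ) + 2) * π (j, m + 2 - j))
            (m + 2)]
          have hz : mu * ((0 : ℕ) : ℝ) / ((m : ℝ) + 2) * π (0, m + 2 - 0) = 0 := by
            norm_num
          rw [hz, add_zero]
          refine Finset.sum_congr rfl fun k _ => ?_
          push_cast
          ring
        -- second piece: extend with vanishing last term
        have hB : ∑ k ∈ Finset.range (m + 2),
              (mu * ((m : ℝ) + 2 - (k : ℝ)) / ((m : ℝ) + 2)
                  + th * ((m : ℝ) + 2 - (k : ℝ))) * π (k, m + 2 - k)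
            = ∑ k ∈ Finset.range (m + 3),
              (mu * ((m : ℝ) + 2 - (k : ℝ)) / ((m : ℝ) + 2)
                  + th * ((m : ℝ) + 2 - (k : ℝ))) * π (k, m + 2 - k) := by
          rw [Finset.sum_range_succ
            (fun k : ℕ => (mu * ((m : ℝ) + 2 - (k : ℝ)) / ((m : ℝ) + 2)
              + th * ((m : ℝ) + 2 - (k : ℝ))) * π (k, m + 2 - k)) (m + 2)]
          have hz : (m : ℝ) + 2 - ((m + 2 : ℕ) : ℝ) = 0 := by
            push_cast
            ring
          rw [hz]
          norm_num
        rw [hA, hB, ← Finset.sum_add_distrib]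
        have merge : ∀ j ∈ Finset.range (m + 3),
            (mu * (j : ℝ) / ((m : ℝ) + 2) * π (j, m + 2 - j)
              + (mu * ((m : ℝ) + 2 - (j : ℝ)) / ((m : ℝ) + 2)
                  + th * ((m : ℝ) + 2 - (j : ℝ))) * π (j, m + 2 - j))
            = mu * π (j, m + 2 - j) + th * (((m + 2 - j : ℕ) : ℝ) * π (j, m + 2 - j)) := by
          intro j hj
          have hj' : j ≤ m + 2 := Nat.lt_succ_iff.mp (Finset.mem_range.mp hj)
          have hc : ((m + 2 - j : ℕ) : ℝ) = (m : ℝ) + 2 - (j : ℝ) := by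
            push_cast [Nat.cast_sub hj']
            ring
          rw [hc]
          field_simp
          ring
        rw [Finset.sum_congr rfl merge]
        simp only [hp, he]
        rw [Finset.sum_add_distrib, ← Finset.mul_sum, ← Finset.mul_sum]
      -- combine
      rw [h1, Finset.sum_add_distrib, Finset.sum_add_distrib, Finset.sum_add_distrib,
        h2, h3] at H
      rw [Finset.sum_add_distrib] at h4
      linear_combination H - h1 + h4 + h1
    -- base case: balance at level 0
    have base : mu * p 1 + th * e 1 = (l1 + lt) * p 0 := by
      have h0 := hbal 0 0
      norm_num at h0
      have hp0 : p 0 = π (0, 0) := by simp [hp]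
      have hp1 : p 1 = π (0, 1) + π (1, 0) := by
        simp [hp, Finset.sum_range_succ]
      have he1 : e 1 = π (0, 1) := by
        simp [he, Finset.sum_range_succ]
      have hzz : π ((0 : ℕ), (0 : ℕ)) = π 0 := rfl
      rw [hp0, hp1, he1, hzz]
      linarith [show π 0 * (l1 + lt) = mu * π (1, 0) + (mu + th) * π (0, 1) from h0]
    intro n
    induction n with
    | zero => exact base
    | succ m ih =>
      have hlev := level m
      linarith
  -- sum the cut balance identities
  have hP1 : HasSum (fun n => p (n + 1)) (1 - p 0) := by
    refine (hasSum_nat_add_iff 1).mpr ?_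
    simpa using hasP
  have hE1 : HasSum (fun n => e (n + 1)) (E - e 0) := by
    refine (hasSum_nat_add_iff 1).mpr ?_
    simpa using hasE
  have hB : HasSum (fun n => mu * p (n + 1) + th * e (n + 1))
      (mu * (1 - p 0) + th * (E - e 0)) := (hP1.mul_left mu).add (hE1.mul_left th)
  have hA : HasSum (fun n => (l1 + lt) * p n) ((l1 + lt) * 1) := hasP.mul_left _
  have hfun : (fun n => mu * p (n + 1) + th * e (n + 1)) = fun n => (l1 + lt) * p n := by
    funext n; exact key n
  rw [hfun] at hB
  have huniq := hA.unique hB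
  have hp0 : p 0 = π (0, 0) := by simp [hp]
  have he0 : e 0 = 0 := by simp [he]
  rw [hp0, he0, sub_zero, mul_one] at huniq
  exact huniq
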